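/- arXiv:2511.03389 — 2 statements merged into one kernel-verified Lean document; each statement's English description precedes it below -/
import Mathlib

section
/- Let $K$ be a field and $P \subseteq S = K[z_1,\ldots,z_N]$ a homogeneous prime ideal. If $z_i$ is a coloop of the algebraic matroid $M(P)$, then $P$ is generated by the elimination ideal $P \cap K[z_1,\ldots,\hat{z_i},\ldots,z_N]$; in particular, $P$ has a generating set of polynomials not involving $z_i$. -/
open MvPolynomial

set_option maxHeartbeats 1000000
set_option synthInstance.maxHeartbeats 400000

/-- A set of variables `E` is independent in the algebraic matroid of `P` if `P`
contains no nonzero polynomial supported on `E`, i.e. `P ∩ K[E] = 0`. -/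
def AlgIndep {K : Type*} [Field K] {N : ℕ}
    (P : Ideal (MvPolynomial (Fin N) K)) (E : Finset (Fin N)) : Prop :=
  ∀ f ∈ P, f.vars ⊆ E → f = 0

theorem phi_rename {K L : Type*} [Field K] [Field L] [Algebra K L] {N : ℕ}
    (φ : MvPolynomial (Fin N) K →ₐ[K] L) {σ : Type*} (g : σ → Fin N)
    (p : MvPolynomial σ K) :
    φ (rename g p) = aeval (fun j : σ => φ (X (g j))) p := by
  conv_lhs => rw [aeval_unique φ]
  rw [aeval_rename]
  rfl

theorem indep_iff {K L : Type*} [Field K] [Field L] [Algebra K L] {N : ℕ}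
    (P : Ideal (MvPolynomial (Fin N) K)) (φ : MvPolynomial (Fin N) K →ₐ[K] L)
    (hker : ∀ f, φ f = 0 ↔ f ∈ P) (E : Finset (Fin N)) :
    AlgIndep P E ↔ AlgebraicIndependent K (fun j : {j // j ∈ E} => φ (X j)) := by
  rw [algebraicIndependent_iff]
  constructor
  · intro hA p hp
    have h1 : φ (rename (Subtype.val) p) = aeval (fun j : {j // j ∈ E} => φ (X j)) p :=
      phi_rename φ Subtype.val p
    have h2 : rename (Subtype.val) p ∈ P := by
      rw [← hker, h1]; exact hp
    have h3 : (rename (Subtype.val) p).vars ⊆ E := by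
      intro j hj
      have := vars_rename (Subtype.val) p hj
      simp only [Finset.mem_image] at this
      obtain ⟨k, _, rfl⟩ := this
      exact k.2
    have := hA _ h2 h3
    exact (rename_injective _ Subtype.val_injective) (by simpa using this)
  · intro hI f hf hvars
    have hsup : f ∈ supported K (E : Set (Fin N)) := by
      rw [mem_supported]
      exact_mod_cast fun j hj => hvars (by exact_mod_cast hj)
    rw [supported_eq_range_rename] at hsup
    obtain ⟨p, rfl⟩ := hsup
    have h1 : φ (rename (Subtype.val) p) = aeval (fun j : {j // j ∈ E} => φ (X j)) p :=
      phi_rename φ Subtype.val p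
    have : p = 0 := hI p (by rw [← h1, hker]; exact hf)
    rw [this, map_zero]

theorem fracAlg {K L : Type*} [Field K] [Field L] [Algebra K L] {s : Set L} {y : L}
    (h : IsAlgebraic (IntermediateField.adjoin K s) y) :
    IsAlgebraic (Algebra.adjoin K s) y := by
  set A0 := Algebra.adjoin K s
  set F0 := IntermediateField.adjoin K s
  letI : Algebra A0 F0 :=
    (Subalgebra.inclusion (IntermediateField.algebra_adjoin_le_adjoin K s)).toRingHom.toAlgebra
  haveI : IsScalarTower A0 F0 L := IsScalarTower.of_algebraMap_eq (congrFun rfl)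
  haveI : IsFractionRing A0 F0 := by
    constructor
    constructor
    · rintro ⟨z, hz⟩
      rw [isUnit_iff_ne_zero]
      intro h0
      have : (z : L) = 0 := by
        have := congrArg (algebraMap F0 L) h0
        rw [← IsScalarTower.algebraMap_apply] at this
        simpa using this
      exact nonZeroDivisors.ne_zero hz (Subtype.ext this)
    · rintro ⟨z, hz⟩
      rw [IntermediateField.mem_adjoin_iff] at hz
      obtain ⟨r, t, hrt⟩ := hz
      have hmem : ∀ q : MvPolynomial s K, aeval (Subtype.val : s → L) q ∈ A0 := by
        intro q
        have : Algebra.adjoin K (Set.range (Subtype.val : s → L)) = A0 := by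
          rw [Subtype.range_coe]
        rw [← this, Algebra.adjoin_range_eq_range_aeval]
        exact ⟨q, rfl⟩
      by_cases hb : aeval (Subtype.val : s → L) t = 0
      · refine ⟨⟨0, 1⟩, ?_⟩
        have hz0 : z = 0 := by rw [hrt, hb, div_zero]
        apply Subtype.ext
        push_cast [hz0]
        simp
      · refine ⟨⟨⟨_, hmem r⟩, ⟨⟨_, hmem t⟩, mem_nonZeroDivisors_of_ne_zero ?_⟩⟩, ?_⟩
        · intro h0
          exact hb (congrArg Subtype.val h0)
        · apply Subtype.ext
          have hcoe : ∀ w : A0, ((algebraMap A0 F0 w : F0) : L) = (w : L) := fun w => rfl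
          push_cast
          rw [hcoe, hcoe]
          show z * _ = _
          rw [hrt, div_mul_cancel₀]
          exact hb
    · intro a b hab
      refine ⟨1, ?_⟩
      have hcoe : ∀ w : A0, ((algebraMap A0 F0 w : F0) : L) = (w : L) := fun w => rfl
      have : (a : L) = b := by
        rw [← hcoe a, ← hcoe b, hab]
      simp [Subtype.ext this]
  exact (IsFractionRing.isAlgebraic_iff A0 F0 L).mpr h

theorem coloop_transc {K L : Type*} [Field K] [Field L] [Algebra K L] {N : ℕ}
    (P : Ideal (MvPolynomial (Fin N) K)) (φ : MvPolynomial (Fin N) K →ₐ[K] L)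
    (hker : ∀ f, φ f = 0 ↔ f ∈ P) (i : Fin N)
    (hcoloop : ∀ B : Finset (Fin N),
      (AlgIndep P B ∧ ∀ j ∉ B, ¬ AlgIndep P (insert j B)) → i ∈ B) :
    Transcendental (Algebra.adjoin K (Set.range fun j : {j : Fin N // j ≠ i} => φ (X j.1)))
      (φ (X i)) := by
  intro halg
  classical
  set y := φ (X i) with hy
  set S0 : Set L := Set.range fun j : {j : Fin N // j ≠ i} => φ (X j.1) with hS0
  -- a maximal independent subset of the complement of i
  set T : Set (Finset (Fin N)) := {B | (∀ j ∈ B, j ≠ i) ∧ AlgIndep P B} with hT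
  have hempty : (∅ : Finset (Fin N)) ∈ T := by
    refine ⟨by simp, ?_⟩
    intro f hf hvars
    have hsup : f ∈ supported K (∅ : Set (Fin N)) := by
      rw [mem_supported]
      simpa using (by exact_mod_cast hvars : (f.vars : Set (Fin N)) ⊆ (∅ : Finset (Fin N)))
    rw [supported_empty, Algebra.mem_bot] at hsup
    obtain ⟨a, rfl⟩ := hsup
    have : algebraMap K L a = 0 := by
      rw [← (hker _).mpr hf]; exact (φ.commutes a).symm
    have ha : a = 0 := by
      exact (map_eq_zero_iff _ (algebraMap K L).injective).mp this
    rw [ha, map_zero]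
  obtain ⟨B, hBT, hBmax⟩ :=
    Set.Finite.exists_maximalFor Finset.card T (Set.toFinite T) ⟨∅, hempty⟩
  have hiB : i ∉ B := fun h => hBT.1 i h rfl
  have hmax' : ∀ j, j ∉ B → j ≠ i → ¬ AlgIndep P (insert j B) := by
    intro j hj hne hAI
    have hmem : insert j B ∈ T := by
      refine ⟨?_, hAI⟩
      intro k hk
      rcases Finset.mem_insert.mp hk with rfl | hk
      · exact hne
      · exact hBT.1 k hk
    have hcard := hBmax hmem (Finset.card_le_card (Finset.subset_insert j B))
    rw [Finset.card_insert_of_notMem hj] at hcard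
    omega
  have hBind : AlgebraicIndependent K (fun j : {j // j ∈ B} => φ (X j.1)) :=
    (indep_iff P φ hker B).mp hBT.2
  set xB : {j // j ∈ B} → L := fun j => φ (X j.1) with hxB
  -- the crux : insert i B is dependent
  have hins : ¬ AlgIndep P (insert i B) := by
    rw [indep_iff P φ hker]
    intro hIndep
    -- independence of the option family, hence y transcendental over adjoin of B
    have hopt : AlgebraicIndependent K (fun o : Option {j // j ∈ B} => o.elim y xB) := by
      let e : Option {j // j ∈ B} → {j // j ∈ insert i B} := fun o =>
        o.elim ⟨i, Finset.mem_insert_self i B⟩ (fun b => ⟨b.1, Finset.mem_insert_of_mem b.2⟩)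
      have einj : Function.Injective e := by
        rintro (_ | a) (_ | b) h
        · rfl
        · simp only [e, Option.elim, Subtype.mk.injEq] at h
          exact absurd (h.symm ▸ b.2) hiB
        · simp only [e, Option.elim, Subtype.mk.injEq] at h
          exact absurd (h ▸ a.2) hiB
        · simp only [e, Option.elim, Option.some.injEq, Subtype.mk.injEq] at h
          exact congrArg some (Subtype.ext h)
      have := hIndep.comp e einj
      have hcomp : ((fun j : {j // j ∈ insert i B} => φ (X j.1)) ∘ e)
          = fun o : Option {j // j ∈ B} => o.elim y xB := by
        funext o; cases o <;> rfl
      rwa [hcomp] at this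
    have htr : Transcendental (Algebra.adjoin K (Set.range xB)) y :=
      (hBind.option_iff_transcendental y).mp hopt
    -- every variable other than i is algebraic over adjoin of B
    have hallB : ∀ j : Fin N, j ≠ i → IsAlgebraic (Algebra.adjoin K (Set.range xB)) (φ (X j)) := by
      intro j hj
      by_cases hjB : j ∈ B
      · exact isAlgebraic_algebraMap
          (⟨φ (X j), Algebra.subset_adjoin ⟨⟨j, hjB⟩, rfl⟩⟩ : Algebra.adjoin K (Set.range xB))
      · have hdep := hmax' j hjB hj
        rw [indep_iff P φ hker] at hdep
        by_contra htrans
        apply hdep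
        have hopt2 : AlgebraicIndependent K
            (fun o : Option {b // b ∈ B} => o.elim (φ (X j)) xB) :=
          (hBind.option_iff_transcendental _).mpr htrans
        let g : {k // k ∈ insert j B} → Option {b // b ∈ B} := fun k =>
          if h : k.1 ∈ B then some ⟨k.1, h⟩ else none
        have ginj : Function.Injective g := by
          rintro ⟨a, ha⟩ ⟨b, hb⟩ h
          by_cases h1 : a ∈ B <;> by_cases h2 : b ∈ B
          · simp only [g, dif_pos h1, dif_pos h2, Option.some.injEq, Subtype.mk.injEq] at h
            exact Subtype.ext h
          · simp only [g, dif_pos h1, dif_neg h2] at h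
            exact (Option.some_ne_none _ h).elim
          · simp only [g, dif_neg h1, dif_pos h2] at h
            exact (Option.some_ne_none _ h.symm).elim
          · exact Subtype.ext (((Finset.mem_insert.mp ha).resolve_right h1).trans
              ((Finset.mem_insert.mp hb).resolve_right h2).symm)
        have := hopt2.comp g ginj
        have hcomp : ((fun o : Option {b // b ∈ B} => o.elim (φ (X j)) xB) ∘ g)
            = fun k : {k // k ∈ insert j B} => φ (X k.1) := by
          funext k
          by_cases h : k.1 ∈ B
          · simp only [Function.comp, g, dif_pos h]
            rfl
          · simp only [Function.comp, g, dif_neg h]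
            have : k.1 = j := (Finset.mem_insert.mp k.2).resolve_right h
            simp [this]
        rwa [hcomp] at this
    -- now transfer algebraicity of y down to adjoin of B
    set s : Set L := Set.range xB with hs
    set A0 := Algebra.adjoin K s with hA0
    set F0 := IntermediateField.adjoin K s with hF0
    letI : Algebra A0 F0 :=
      (Subalgebra.inclusion (IntermediateField.algebra_adjoin_le_adjoin K s)).toRingHom.toAlgebra
    haveI : IsScalarTower A0 F0 L := IsScalarTower.of_algebraMap_eq (congrFun rfl)
    have hallF : ∀ z ∈ S0, IsAlgebraic F0 z := by
      rintro _ ⟨j, rfl⟩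
      have hinjAF : Function.Injective (algebraMap A0 F0) := by
        intro a b h
        have := congrArg Subtype.val h
        exact Subtype.ext this
      exact (hallB j.1 j.2).extendScalars hinjAF
    set E1 := IntermediateField.adjoin F0 S0 with hE1
    haveI halgE1 : Algebra.IsAlgebraic F0 E1 :=
      (IntermediateField.isAlgebraic_adjoin_iff_isAlgebraic (F := F0) (E := L)).mpr hallF
    haveI : Algebra.IsIntegral F0 E1 := Algebra.isAlgebraic_iff_isIntegral.mp halgE1
    -- y is algebraic over E1
    have hRle : ∀ r : Algebra.adjoin K S0, (r : L) ∈ E1 := by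
      intro r
      have hle : Algebra.adjoin K S0 ≤ Subalgebra.restrictScalars K E1.toSubalgebra := by
        apply Algebra.adjoin_le
        intro z hz
        exact IntermediateField.subset_adjoin F0 S0 hz
      exact hle r.2
    letI : Algebra (Algebra.adjoin K S0) E1 := RingHom.toAlgebra
      { toFun := fun r => ⟨r.1, hRle r⟩
        map_one' := rfl
        map_mul' := fun _ _ => rfl
        map_zero' := rfl
        map_add' := fun _ _ => rfl }
    haveI : IsScalarTower (Algebra.adjoin K S0) E1 L :=
      IsScalarTower.of_algebraMap_eq (congrFun rfl)
    have hinjRE : Function.Injective (algebraMap (Algebra.adjoin K S0) E1) := by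
      intro a b h
      have := congrArg Subtype.val h
      exact Subtype.ext this
    have hyE1 : IsAlgebraic E1 y := halg.extendScalars hinjRE
    have hyF0 : IsAlgebraic F0 y := (isIntegral_trans y hyE1.isIntegral).isAlgebraic
    exact htr (fracAlg hyF0)
  -- assemble : B is a basis, so i ∈ B, contradiction
  apply hiB
  apply hcoloop B
  refine ⟨hBT.2, ?_⟩
  intro j hj
  by_cases hji : j = i
  · subst hji; exact hins
  · exact hmax' j hj hji

theorem elimination {K L : Type*} [Field K] [Field L] [Algebra K L] {N : ℕ}
    (P : Ideal (MvPolynomial (Fin N) K)) (φ : MvPolynomial (Fin N) K →ₐ[K] L)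
    (hker : ∀ f, φ f = 0 ↔ f ∈ P) (i : Fin N)
    (htr : Transcendental
      (Algebra.adjoin K (Set.range fun j : {j : Fin N // j ≠ i} => φ (X j.1))) (φ (X i))) :
    P = Ideal.span {f : MvPolynomial (Fin N) K | f ∈ P ∧ i ∉ f.vars} := by
  classical
  refine le_antisymm ?_ (Ideal.span_le.mpr fun f hf => hf.1)
  intro f hf
  set R := MvPolynomial {j : Fin N // j ≠ i} K
  set e : Fin N ≃ Option {j : Fin N // j ≠ i} := (Equiv.optionSubtypeNe i).symm with he
  set Φ : MvPolynomial (Fin N) K ≃ₐ[K] Polynomial R :=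
    (renameEquiv K e).trans (optionEquivLeft K {j : Fin N // j ≠ i}) with hΦ
  set emb : R →ₐ[K] MvPolynomial (Fin N) K := rename Subtype.val with hemb
  -- Φ of the building blocks
  have hΦemb : ∀ c : R, Φ (emb c) = Polynomial.C c := by
    intro c
    have : (Φ.toAlgHom.comp emb : R →ₐ[K] Polynomial R) = Polynomial.CAlgHom := by
      apply MvPolynomial.algHom_ext
      intro j
      simp only [AlgHom.coe_comp, Function.comp_apply, AlgEquiv.toAlgHom_eq_coe,
        AlgHom.coe_coe, hemb, rename_X, hΦ, AlgEquiv.trans_apply, renameEquiv_apply,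
        Polynomial.CAlgHom_apply]
      rw [he]
      rw [AlgEquiv.coe_algHom, AlgEquiv.trans_apply, renameEquiv_apply, rename_X]
      rw [show (Equiv.optionSubtypeNe i).symm (j : Fin N) = some j by
        rw [Equiv.optionSubtypeNe_symm_of_ne j.2]]
      exact optionEquivLeft_X_some K _ j
    exact AlgHom.congr_fun this c
  have hΦX : Φ (X i) = Polynomial.X := by
    simp only [hΦ, AlgEquiv.trans_apply, renameEquiv_apply, rename_X]
    rw [he, show (Equiv.optionSubtypeNe i).symm i = none from Equiv.optionSubtypeNe_symm_self i]
    exact optionEquivLeft_X_none K _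
  have hmono : ∀ (k : ℕ) (c : R), Φ.symm (Polynomial.monomial k c) = emb c * X i ^ k := by
    intro k c
    apply Φ.injective
    rw [AlgEquiv.apply_symm_apply, map_mul, map_pow, hΦemb, hΦX,
      Polynomial.C_mul_X_pow_eq_monomial]
  have decomp : f = ((Φ f).support.sum fun k => emb ((Φ f).coeff k) * X i ^ k) := by
    conv_lhs => rw [← Φ.symm_apply_apply f, ← Polynomial.sum_monomial_eq (Φ f)]
    rw [Polynomial.sum_def, map_sum]
    exact Finset.sum_congr rfl fun k _ => hmono k _
  -- the coefficients are in P
  have hcoeff : ∀ k, emb ((Φ f).coeff k) ∈ P := by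
    intro k
    set S0 : Set L := Set.range fun j : {j : Fin N // j ≠ i} => φ (X j.1) with hS0
    set R' := Algebra.adjoin K S0 with hR'
    set xR : {j : Fin N // j ≠ i} → R' := fun j => ⟨φ (X j.1), Algebra.subset_adjoin ⟨j, rfl⟩⟩
      with hxR
    set ψ : R →ₐ[K] R' := aeval xR with hψ
    have hval : ∀ c : R, (ψ c : L) = φ (emb c) := by
      intro c
      have : (R'.val.comp ψ : R →ₐ[K] L) = φ.comp emb := by
        apply MvPolynomial.algHom_ext
        intro j
        simp [hψ, hemb, hxR]
      exact AlgHom.congr_fun this c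
    have haeval : Polynomial.aeval (φ (X i)) ((Φ f).map ψ.toRingHom) = 0 := by
      have h1 : Polynomial.aeval (φ (X i)) ((Φ f).map ψ.toRingHom) = φ f := by
        rw [Polynomial.aeval_def, Polynomial.eval₂_map, Polynomial.eval₂_eq_sum,
          Polynomial.sum_def]
        conv_rhs => rw [decomp]
        rw [map_sum]
        refine Finset.sum_congr rfl fun k _ => ?_
        rw [map_mul, map_pow]
        congr 1
        exact hval _
      rw [h1, hker]
      exact hf
    have hq0 : (Φ f).map ψ.toRingHom = 0 := (transcendental_iff.mp htr) _ haeval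
    have : ψ ((Φ f).coeff k) = 0 := by
      have := congrArg (fun q => Polynomial.coeff q k) hq0
      simpa [Polynomial.coeff_map] using this
    rw [← hker]
    rw [← hval]
    rw [this]
    exact ZeroMemClass.coe_zero _
  -- conclude
  rw [decomp]
  apply Ideal.sum_mem
  intro k _
  apply Ideal.mul_mem_right
  apply Ideal.subset_span
  refine ⟨hcoeff k, ?_⟩
  intro hivars
  have := vars_rename (Subtype.val) ((Φ f).coeff k) hivars
  simp only [Finset.mem_image] at this
  obtain ⟨j, _, hji⟩ := this
  exact j.2 hji

/-- If `z i` is a coloop of the algebraic matroid of a homogeneous prime ideal `P`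
(i.e. `z i` lies in every basis, a basis being a maximal independent set), then `P` is
generated by its elimination ideal `P ∩ K[z_1,…,ẑᵢ,…,z_N]`; in particular `P` has a
generating set of polynomials not involving `z i`. -/
theorem stmt4 {K : Type*} [Field K] {N : ℕ}
    (P : Ideal (MvPolynomial (Fin N) K)) (hP : P.IsPrime)
    (hhom : ∃ G : Set (MvPolynomial (Fin N) K),
      P = Ideal.span G ∧ ∀ g ∈ G, ∃ d, g.IsHomogeneous d)
    (i : Fin N)
    (hcoloop : ∀ B : Finset (Fin N),
      (AlgIndep P B ∧ ∀ j ∉ B, ¬ AlgIndep P (insert j B)) → i ∈ B) :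
    P = Ideal.span {f : MvPolynomial (Fin N) K | f ∈ P ∧ i ∉ f.vars} := by
  haveI := hP
  haveI : IsDomain (MvPolynomial (Fin N) K ⧸ P) := Ideal.Quotient.isDomain P
  set A := MvPolynomial (Fin N) K ⧸ P
  set L := FractionRing A
  haveI : IsScalarTower K A L := inferInstance
  set φ : MvPolynomial (Fin N) K →ₐ[K] L :=
    (IsScalarTower.toAlgHom K A L).comp (Ideal.Quotient.mkₐ K P) with hφ
  have hker : ∀ f, φ f = 0 ↔ f ∈ P := by
    intro f
    simp only [hφ, AlgHom.coe_comp, Function.comp_apply, IsScalarTower.coe_toAlgHom',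
      Ideal.Quotient.mkₐ_eq_mk]
    rw [map_eq_zero_iff _ (IsFractionRing.injective A L)]
    exact Ideal.Quotient.eq_zero_iff_mem
  exact elimination P φ hker i (coloop_transc P φ hker i hcoloop)
end

section
/- Let $K$ be an algebraically closed field of characteristic zero, $X_1,\ldots,X_s \subseteq \mathbb{A}^N_K$ irreducible affine cones with join $X$, and suppose $B$ is a basis of $M(X_1) \vee \cdots \vee M(X_s)$ such that the join $\overline{\pi_B(X_1)} + \cdots + \overline{\pi_B(X_s)} \subseteq K^B$ is defective (has dimension strictly less than $\min\{|B|, \sum_i \dim \overline{\pi_B(X_i)}\}$). Then $B$ is dependent in $M(X)$, and hence $M(X) \neq M(X_1) \vee \cdots \vee M(X_s)$. -/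
open MvPolynomial

/-- The Zariski closure of a subset of affine space. -/
def zClosure {K : Type*} [Field K] {σ : Type*} (S : Set (σ → K)) : Set (σ → K) :=
  {x | ∀ f : MvPolynomial σ K, (∀ y ∈ S, eval y f = 0) → eval x f = 0}

/-- The vanishing ideal of a subset of affine space. -/
def vIdeal {K : Type*} [Field K] {σ : Type*} (S : Set (σ → K)) :
    Ideal (MvPolynomial σ K) where
  carrier := {f | ∀ x ∈ S, eval x f = 0}
  add_mem' ha hb := fun x hx => by simp [ha x hx, hb x hx]
  zero_mem' := fun x hx => by simp
  smul_mem' c a ha := fun x hx => by simp [ha x hx]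

/-- The dimension of a subset of affine space: the Krull dimension of its coordinate
ring. -/
noncomputable def varDim {K : Type*} [Field K] {σ : Type*} (S : Set (σ → K)) :
    WithBot ℕ∞ :=
  ringKrullDim (MvPolynomial σ K ⧸ vIdeal S)

/-- A set of variables `E` is independent in the algebraic matroid `M(S)`. -/
def SIndep {K : Type*} [Field K] {N : ℕ} (S : Set (Fin N → K))
    (E : Finset (Fin N)) : Prop :=
  ∀ f : MvPolynomial (Fin N) K, (∀ x ∈ S, eval x f = 0) → f.vars ⊆ E → f = 0


lemma aux_card_le_krullDim (K : Type*) [Field K] (σ : Type*) [Fintype σ] :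
    (Fintype.card σ : WithBot ℕ∞) ≤ ringKrullDim (MvPolynomial σ K) := by
  classical
  set n := Fintype.card σ with hn
  let e : σ ≃ Fin n := Fintype.equivFin σ
  let g : ℕ → σ → MvPolynomial σ K := fun k i => if (e i : ℕ) < k then X i else 0
  let P : ℕ → Ideal (MvPolynomial σ K) := fun k => RingHom.ker (aeval (R := K) (g k)).toRingHom
  have hprime : ∀ k, (P k).IsPrime := fun k => RingHom.ker_isPrime _
  have hmem : ∀ k f, f ∈ P k ↔ aeval (R := K) (g k) f = 0 := fun k f => Iff.rfl
  have hcomp : ∀ k, (aeval (R := K) (g k)).comp (aeval (R := K) (g (k+1))) = aeval (R := K) (g k) := by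
    intro k
    apply MvPolynomial.algHom_ext
    intro i
    simp only [AlgHom.comp_apply, aeval_X]
    by_cases h : (e i : ℕ) < k + 1
    · simp [g, h]
    · have h' : ¬ ((e i : ℕ) < k) := fun hh => h (hh.trans (Nat.lt_succ_self k))
      simp [g, h, h']
  have hlt : ∀ k, k < n → P (k+1) < P k := by
    intro k hk
    have hle : P (k+1) ≤ P k := by
      intro f hf
      rw [hmem] at hf ⊢
      rw [← hcomp k, AlgHom.comp_apply, hf, map_zero]
    refine lt_of_le_of_ne hle ?_
    intro hEq
    have hw1 : X (e.symm ⟨k, hk⟩) ∈ P k := by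
      rw [hmem, aeval_X]
      simp [g]
    have hw2 : X (e.symm ⟨k, hk⟩) ∉ P (k+1) := by
      rw [hmem, aeval_X]
      simp [g]
    rw [← hEq] at hw1
    exact hw2 hw1
  let c : LTSeries (PrimeSpectrum (MvPolynomial σ K)) :=
    { length := n
      toFun := fun j => ⟨P (n - (j : ℕ)), hprime _⟩
      step := by
        intro j
        show (_ : PrimeSpectrum (MvPolynomial σ K)) < _
        rw [← PrimeSpectrum.asIdeal_lt_asIdeal]
        show P (n - (j : ℕ)) < P (n - ((j : ℕ) + 1))
        have hj : (j : ℕ) < n := j.2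
        have h1 : n - (j : ℕ) = (n - ((j : ℕ) + 1)) + 1 := by omega
        rw [h1]
        exact hlt _ (by omega) }
  have := Order.LTSeries.length_le_krullDim c
  exact_mod_cast this

/-- One direction of the Union Theorem: if `B` is a basis of the matroid union
`M(X 0) ∨ ⋯ ∨ M(X (s-1))` of irreducible affine cones such that the projected join
`cl(π_B(X 0)) + ⋯ + cl(π_B(X (s-1))) ⊆ K^B` is defective, then `B` is dependent in the
algebraic matroid of the join `J`, and hence `M(J)` is not the matroid union (not a
Terracini union). -/
theorem stmt13 {K : Type*} [Field K] [IsAlgClosed K] [CharZero K] {N s : ℕ}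
    (X : Fin s → Set (Fin N → K))
    (hX : ∀ i, ∃ P : Ideal (MvPolynomial (Fin N) K), P.IsPrime ∧
      (∃ G : Set (MvPolynomial (Fin N) K),
        P = Ideal.span G ∧ ∀ g ∈ G, ∃ d, g.IsHomogeneous d) ∧
      X i = {x | ∀ f ∈ P, eval x f = 0})
    (J : Set (Fin N → K))
    (hJ : J = zClosure {x | ∃ g : Fin s → (Fin N → K),
      (∀ i, g i ∈ X i) ∧ x = ∑ i, g i})
    (B : Finset (Fin N))
    -- `B` is independent in the matroid union:
    (hBindep : ∃ F : Fin s → Finset (Fin N),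
      B = Finset.univ.biUnion F ∧ ∀ i, SIndep (X i) (F i))
    -- `B` is maximal such, i.e. a basis of the matroid union:
    (hBmax : ∀ j ∉ B, ¬ ∃ F : Fin s → Finset (Fin N),
      insert j B = Finset.univ.biUnion F ∧ ∀ i, SIndep (X i) (F i))
    -- the projected join is defective:
    (hdef : varDim (zClosure {y : B → K | ∃ g : Fin s → (B → K),
        (∀ i, g i ∈ zClosure ((fun (x : Fin N → K) (j : B) => x j) '' X i)) ∧
        y = ∑ i, g i}) <
      min ((B.card : WithBot ℕ∞))
        (∑ i, varDim (zClosure ((fun (x : Fin N → K) (j : B) => x j) '' X i)))) :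
    ¬ SIndep J B ∧
    ¬ (∀ E : Finset (Fin N), SIndep J E ↔
        ∃ F : Fin s → Finset (Fin N),
          E = Finset.univ.biUnion F ∧ ∀ i, SIndep (X i) (F i)) := by
  classical
  have hnot : ¬ SIndep J B := by
    intro hind
    set Z0 : Set (↥B → K) := {y : B → K | ∃ g : Fin s → (B → K),
        (∀ i, g i ∈ zClosure ((fun (x : Fin N → K) (j : B) => x j) '' X i)) ∧
        y = ∑ i, g i} with hZ0
    have hbot : vIdeal (zClosure Z0) = ⊥ := by
      ext f
      simp only [Ideal.mem_bot]
      constructor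
      · intro hf
        have hf' : ∀ y ∈ Z0, eval y f = 0 := fun y hy => hf y (fun p hp => hp y hy)
        have hvan : ∀ x ∈ J, eval x (rename (Subtype.val : ↥B → Fin N) f) = 0 := by
          intro x hx
          rw [hJ] at hx
          refine hx _ ?_
          rintro y ⟨g, hg, rfl⟩
          rw [eval_rename]
          have hmem : (fun j : ↥B => (∑ i, g i) (j : Fin N)) ∈ Z0 := by
            refine ⟨fun i j => g i (j : Fin N), fun i => ?_, ?_⟩
            · exact fun p hp => hp _ ⟨g i, hg i, rfl⟩
            · funext j; simp [Finset.sum_apply]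
          exact hf' _ hmem
        have hvars : (rename (Subtype.val : ↥B → Fin N) f).vars ⊆ B := by
          intro a ha
          have := MvPolynomial.vars_rename (Subtype.val : ↥B → Fin N) f ha
          obtain ⟨b, _, rfl⟩ := Finset.mem_image.mp this
          exact b.2
        have hF0 := hind _ hvan hvars
        refine MvPolynomial.rename_injective _ Subtype.val_injective ?_
        rw [hF0, map_zero]
      · rintro rfl
        intro x _
        simp
    have hdim : varDim (zClosure Z0) = ringKrullDim (MvPolynomial ↥B K) := by
      unfold varDim
      refine ringKrullDim_eq_of_ringEquiv ?_
      refine (Ideal.quotEquivOfEq ?_).trans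
        (RingHom.quotientKerEquivOfRightInverse
          (f := RingHom.id (MvPolynomial ↥B K)) (g := _root_.id) (fun x => rfl))
      rw [hbot]
      ext x
      simp [RingHom.mem_ker]
    have hge := aux_card_le_krullDim K ↥B
    rw [Fintype.card_coe] at hge
    have hlt' : varDim (zClosure Z0) < (B.card : WithBot ℕ∞) :=
      lt_of_lt_of_le hdef (min_le_left _ _)
    rw [hdim] at hlt'
    exact absurd hge (not_le_of_gt hlt')
  exact ⟨hnot, fun hiff => hnot ((hiff B).mpr hBindep)⟩
end
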